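/- arXiv:2404.10914 — 2 statements merged into one kernel-verified Lean document; each statement's English description precedes it below -/
import Mathlib

section
/- Let n, m, p be positive integers. For all k ≥ 0, let A_k ∈ ℝ^{n×n} be nonsingular, B_k ∈ ℝ^{n×m}, C_k ∈ ℝ^{p×n}, Γ_k ∈ ℝ^{p×p} positive definite, u_k ∈ ℝ^m, y_k ∈ ℝ^p; let P_0 ∈ ℝ^{n×n} be positive definite and x̂_0 ∈ ℝ^n. For all k ≥ 0, let F_k ∈ ℝ^{n×n} be positive semidefinite with F_k ≺ Φ_{0,k}ᵀ P_0^{-1} Φ_{0,k} + Σ_{i=0}^{k-1} ( Φ_{i+1,k}ᵀ C_iᵀ Γ_i^{-1} C_i Φ_{i+1,k} − Φ_{i,k}ᵀ F_i Φ_{i,k} ). Then for every k ≥ 0 the cost J_k(x̂) = Σ_{i=0}^{k} ‖y_i − C_i 𝒯_{i+1,k+1}(x̂)‖²_{Γ_i^{-1}} − Σ_{i=0}^{k} ‖𝒯_{i,k+1}(x̂) − x̂_i‖²_{F_i} + ‖𝒯_{0,k+1}(x̂) − x̂_0‖²_{P_0^{-1}} has a unique global minimizer x̂_{k+1} ∈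 ℝ^n, and these minimizers are given recursively by P_{k+1}^{-1} = A_k^{-ᵀ}(P_k^{-1} − F_k)A_k^{-1} + C_kᵀ Γ_k^{-1} C_k and x̂_{k+1} = A_k x̂_k + B_k u_k + P_{k+1} C_kᵀ Γ_k^{-1}(y_k − C_k(A_k x̂_k + B_k u_k)), where each P_k ∈ ℝ^{n×n} is positive definite. -/
open Matrix Finset

noncomputable section

/-- Forward product `A_{i+d-1} ⋯ A_{i+1} A_i`. -/
def prodA {n : ℕ} (A : ℕ → Matrix (Fin n) (Fin n) ℝ) (i : ℕ) : ℕ → Matrix (Fin n) (Fin n) ℝ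
  | 0 => 1
  | d + 1 => A (i + d) * prodA A i d

/-- State transition matrix `Φ_{k,i}`: `A_{k-1}⋯A_i` for `i < k`, `I` for `i = k`,
and `A_k⁻¹ A_{k+1}⁻¹ ⋯ A_{i-1}⁻¹ = (A_{i-1}⋯A_k)⁻¹` for `k < i`. -/
def Phi {n : ℕ} (A : ℕ → Matrix (Fin n) (Fin n) ℝ) (k i : ℕ) : Matrix (Fin n) (Fin n) ℝ :=
  if i ≤ k then prodA A i (k - i) else (prodA A k (i - k))⁻¹

/-- State transition function `𝒯_{k,i}`. -/
def Tfun {n m : ℕ} (A : ℕ → Matrix (Fin n) (Fin n) ℝ) (B : ℕ → Matrix (Fin n) (Fin m) ℝ)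
    (u : ℕ → Fin m → ℝ) (k i : ℕ) (x : Fin n → ℝ) : Fin n → ℝ :=
  if i ≤ k then Phi A k i *ᵥ x + ∑ j ∈ Finset.Ico i k, Phi A k (j + 1) *ᵥ (B j *ᵥ u j)
  else Phi A k i *ᵥ (x - ∑ j ∈ Finset.Ico k i, Phi A i (j + 1) *ᵥ (B j *ᵥ u j))

/-- Weighted squared (semi)norm `‖x‖²_R = xᵀ R x`. -/
def qnorm {q : ℕ} (R : Matrix (Fin q) (Fin q) ℝ) (x : Fin q → ℝ) : ℝ := x ⬝ᵥ (R *ᵥ x)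

namespace KFLSaux

variable {n m p : ℕ}

section PhiT
variable (A : ℕ → Matrix (Fin n) (Fin n) ℝ)

lemma mulVec_sum_aux {a b : ℕ} (M : Matrix (Fin a) (Fin b) ℝ) {ι : Type*} (s : Finset ι)
    (f : ι → Fin b → ℝ) : M *ᵥ (∑ j ∈ s, f j) = ∑ j ∈ s, M *ᵥ f j := by
  simp only [← Matrix.mulVecLin_apply, map_sum]

lemma Phi_self (k : ℕ) : Phi A k k = 1 := by
  simp [Phi, prodA]

lemma Phi_back {i k : ℕ} (h : i ≤ k) : Phi A i k = (prodA A i (k - i))⁻¹ := by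
  rcases eq_or_lt_of_le h with rfl | h
  · simp [Phi, prodA, inv_one]
  · rw [Phi, if_neg (by omega)]

lemma Phi_back_succ {i k : ℕ} (h : i ≤ k) : Phi A i (k + 1) = Phi A i k * (A k)⁻¹ := by
  rw [Phi_back A (by omega), Phi_back A h]
  have h1 : k + 1 - i = (k - i) + 1 := by omega
  rw [h1]
  show (A (i + (k - i)) * prodA A i (k - i))⁻¹ = _
  rw [Nat.add_sub_cancel' h, Matrix.mul_inv_rev]

lemma Phi_fwd_succ {j k : ℕ} (h : j ≤ k) : Phi A (k + 1) j = A k * Phi A k j := by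
  rw [Phi, if_pos (by omega), Phi, if_pos h]
  have h1 : k + 1 - j = (k - j) + 1 := by omega
  rw [h1]
  show A (j + (k - j)) * prodA A j (k - j) = _
  rw [Nat.add_sub_cancel' h]

lemma Tfun_self (B : ℕ → Matrix (Fin n) (Fin m) ℝ) (u : ℕ → Fin m → ℝ) (k : ℕ) (x : Fin n → ℝ) :
    Tfun A B u k k x = x := by
  simp [Tfun, Phi_self]

lemma Tfun_shift (B : ℕ → Matrix (Fin n) (Fin m) ℝ) (u : ℕ → Fin m → ℝ) {i k : ℕ}
    (hAk : IsUnit (A k).det) (h : i ≤ k) (x : Fin n → ℝ) :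
    Tfun A B u i (k + 1) x = Tfun A B u i k ((A k)⁻¹ *ᵥ (x - B k *ᵥ u k)) := by
  have hIco : Finset.Ico i (k + 1) = insert k (Finset.Ico i k) :=
    Nat.Ico_succ_right_eq_insert_Ico h
  rcases eq_or_lt_of_le h with rfl | hik
  · rw [Tfun, if_neg (by omega), Tfun, if_pos le_rfl]
    simp [Phi_self, Phi_back_succ A le_rfl]
  · rw [Tfun, if_neg (by omega), Tfun, if_neg (by omega)]
    rw [hIco, Finset.sum_insert (by simp)]
    have hsum : ∀ j ∈ Finset.Ico i k, Phi A (k+1) (j+1) *ᵥ (B j *ᵥ u j)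
        = A k *ᵥ (Phi A k (j+1) *ᵥ (B j *ᵥ u j)) := by
      intro j hj
      simp only [Finset.mem_Ico] at hj
      rw [Phi_fwd_succ A (by omega), ← mulVec_mulVec]
    rw [Finset.sum_congr rfl hsum, ← mulVec_sum_aux, Phi_self, one_mulVec,
      Phi_back_succ A (le_of_lt hik), ← mulVec_mulVec]
    have : x - (B k *ᵥ u k + A k *ᵥ ∑ j ∈ Finset.Ico i k, Phi A k (j+1) *ᵥ (B j *ᵥ u j))
        = (x - B k *ᵥ u k) - A k *ᵥ ∑ j ∈ Finset.Ico i k, Phi A k (j+1) *ᵥ (B j *ᵥ u j) := by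
      abel
    rw [this, mulVec_sub, mulVec_mulVec, Matrix.nonsing_inv_mul _ hAk, one_mulVec]

end PhiT

section Quad

lemma dot_swap {a b : ℕ} (R : Matrix (Fin a) (Fin b) ℝ) (v : Fin a → ℝ) (w : Fin b → ℝ) :
    v ⬝ᵥ (R *ᵥ w) = w ⬝ᵥ (Rᵀ *ᵥ v) := by
  rw [dotProduct_mulVec, ← mulVec_transpose, dotProduct_comm]

lemma qnorm_sub_matrix {q : ℕ} (R S : Matrix (Fin q) (Fin q) ℝ) (x : Fin q → ℝ) :
    qnorm (R - S) x = qnorm R x - qnorm S x := by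
  simp [qnorm, Matrix.sub_mulVec, dotProduct_sub]

lemma qnorm_zero {q : ℕ} (R : Matrix (Fin q) (Fin q) ℝ) : qnorm R 0 = 0 := by
  simp [qnorm]

lemma qnorm_sub_expand {q : ℕ} (R : Matrix (Fin q) (Fin q) ℝ) (u v : Fin q → ℝ) :
    qnorm R (u - v) = qnorm R u - u ⬝ᵥ (R *ᵥ v) - v ⬝ᵥ (R *ᵥ u) + qnorm R v := by
  simp only [qnorm, mulVec_sub, dotProduct_sub, sub_dotProduct]
  ring

/-- Completing the square. -/
lemma complete_square {q r : ℕ} (W M : Matrix (Fin q) (Fin q) ℝ) (hWs : Wᵀ = W)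
    (Ai : Matrix (Fin q) (Fin q) ℝ)
    (Cm : Matrix (Fin r) (Fin q) ℝ) (G : Matrix (Fin r) (Fin r) ℝ) (hGs : Gᵀ = G)
    (hM : M = Aiᵀ * W * Ai + Cmᵀ * G * Cm) (hMs : Mᵀ = M) (hMu : IsUnit M.det)
    (xb : Fin q → ℝ) (yv : Fin r → ℝ) (x : Fin q → ℝ) :
    qnorm W (Ai *ᵥ (x - xb)) + qnorm G (yv - Cm *ᵥ x)
      = qnorm M (x - (xb + M⁻¹ *ᵥ (Cmᵀ *ᵥ (G *ᵥ (yv - Cm *ᵥ xb)))))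
        + (qnorm G (yv - Cm *ᵥ xb) - qnorm M⁻¹ (Cmᵀ *ᵥ (G *ᵥ (yv - Cm *ᵥ xb)))) := by
  set d : Fin q → ℝ := x - xb with hd
  set e : Fin r → ℝ := yv - Cm *ᵥ xb with he
  set b : Fin q → ℝ := Cmᵀ *ᵥ (G *ᵥ e) with hb
  have hx1 : yv - Cm *ᵥ x = e - Cm *ᵥ d := by
    rw [he, hd, mulVec_sub]; abel
  have hx2 : x - (xb + M⁻¹ *ᵥ b) = d - M⁻¹ *ᵥ b := by
    rw [hd]; abel
  rw [hx1, hx2]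
  rw [qnorm_sub_expand G e (Cm *ᵥ d), qnorm_sub_expand M d (M⁻¹ *ᵥ b)]
  have c1 : e ⬝ᵥ (G *ᵥ (Cm *ᵥ d)) = d ⬝ᵥ b := by
    rw [dot_swap G e (Cm *ᵥ d), hGs, dotProduct_comm, dot_swap Cm (G *ᵥ e) d]
  have c2 : (Cm *ᵥ d) ⬝ᵥ (G *ᵥ e) = d ⬝ᵥ b := by
    rw [dotProduct_comm, dot_swap Cm (G *ᵥ e) d]
  have hMb : M *ᵥ (M⁻¹ *ᵥ b) = b := by
    rw [mulVec_mulVec, Matrix.mul_nonsing_inv _ hMu, one_mulVec]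
  have c3 : d ⬝ᵥ (M *ᵥ (M⁻¹ *ᵥ b)) = d ⬝ᵥ b := by rw [hMb]
  have c4 : (M⁻¹ *ᵥ b) ⬝ᵥ (M *ᵥ d) = d ⬝ᵥ b := by
    rw [dot_swap M (M⁻¹ *ᵥ b) d, hMs, hMb]
  have c5 : qnorm M (M⁻¹ *ᵥ b) = qnorm M⁻¹ b := by
    rw [qnorm, hMb, dotProduct_comm, qnorm]
  have c6 : qnorm M d = qnorm W (Ai *ᵥ d) + qnorm G (Cm *ᵥ d) := by
    rw [qnorm, hM, add_mulVec, dotProduct_add]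
    congr 1
    · rw [← mulVec_mulVec, ← mulVec_mulVec, dot_swap Aiᵀ d (W *ᵥ (Ai *ᵥ d)),
        transpose_transpose, dotProduct_comm, qnorm]
    · rw [← mulVec_mulVec, ← mulVec_mulVec, dot_swap Cmᵀ d (G *ᵥ (Cm *ᵥ d)),
        transpose_transpose, dotProduct_comm, qnorm]
  rw [c1, c2, c3, c4, c5, c6]
  ring

end Quad

/-- The inverse-covariance recursion. -/
def PinvSeq (A : ℕ → Matrix (Fin n) (Fin n) ℝ) (C : ℕ → Matrix (Fin p) (Fin n) ℝ)
    (Γ : ℕ → Matrix (Fin p) (Fin p) ℝ) (F : ℕ → Matrix (Fin n) (Fin n) ℝ)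
    (P₀ : Matrix (Fin n) (Fin n) ℝ) : ℕ → Matrix (Fin n) (Fin n) ℝ
  | 0 => P₀⁻¹
  | k + 1 => ((A k)⁻¹)ᵀ * (PinvSeq A C Γ F P₀ k - F k) * (A k)⁻¹ + (C k)ᵀ * (Γ k)⁻¹ * C k

/-- The state-estimate recursion. -/
def xhSeq (A : ℕ → Matrix (Fin n) (Fin n) ℝ) (B : ℕ → Matrix (Fin n) (Fin m) ℝ)
    (C : ℕ → Matrix (Fin p) (Fin n) ℝ) (Γ : ℕ → Matrix (Fin p) (Fin p) ℝ)
    (F : ℕ → Matrix (Fin n) (Fin n) ℝ) (P₀ : Matrix (Fin n) (Fin n) ℝ)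
    (u : ℕ → Fin m → ℝ) (y : ℕ → Fin p → ℝ) (xhat₀ : Fin n → ℝ) : ℕ → Fin n → ℝ
  | 0 => xhat₀
  | k + 1 =>
      (A k *ᵥ xhSeq A B C Γ F P₀ u y xhat₀ k + B k *ᵥ u k)
        + (PinvSeq A C Γ F P₀ (k + 1))⁻¹ *ᵥ ((C k)ᵀ *ᵥ ((Γ k)⁻¹ *ᵥ
            (y k - C k *ᵥ (A k *ᵥ xhSeq A B C Γ F P₀ u y xhat₀ k + B k *ᵥ u k))))

/-- The (shifted) cost: `Jbig (k+1)` is the KFLS cost `J_k`, and `Jbig 0` is the prior term. -/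
def Jbig (A : ℕ → Matrix (Fin n) (Fin n) ℝ) (B : ℕ → Matrix (Fin n) (Fin m) ℝ)
    (C : ℕ → Matrix (Fin p) (Fin n) ℝ) (Γ : ℕ → Matrix (Fin p) (Fin p) ℝ)
    (u : ℕ → Fin m → ℝ) (y : ℕ → Fin p → ℝ) (P₀ : Matrix (Fin n) (Fin n) ℝ)
    (xhat₀ : Fin n → ℝ) (xh : ℕ → Fin n → ℝ) (F : ℕ → Matrix (Fin n) (Fin n) ℝ) :
    ℕ → (Fin n → ℝ) → ℝ
  | 0 => fun x => qnorm P₀⁻¹ (x - xhat₀)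
  | k + 1 => fun x =>
      (∑ i ∈ Finset.range (k + 1), qnorm (Γ i)⁻¹ (y i - C i *ᵥ Tfun A B u (i + 1) (k + 1) x))
        - (∑ i ∈ Finset.range (k + 1), qnorm (F i) (Tfun A B u i (k + 1) x - xh i))
        + qnorm P₀⁻¹ (Tfun A B u 0 (k + 1) x - xhat₀)

lemma Jbig_succ (A : ℕ → Matrix (Fin n) (Fin n) ℝ) (B : ℕ → Matrix (Fin n) (Fin m) ℝ)
    (C : ℕ → Matrix (Fin p) (Fin n) ℝ) (Γ : ℕ → Matrix (Fin p) (Fin p) ℝ)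
    (u : ℕ → Fin m → ℝ) (y : ℕ → Fin p → ℝ) (P₀ : Matrix (Fin n) (Fin n) ℝ)
    (xhat₀ : Fin n → ℝ) (xh : ℕ → Fin n → ℝ) (F : ℕ → Matrix (Fin n) (Fin n) ℝ)
    (k : ℕ) (hAk : IsUnit (A k).det) (x : Fin n → ℝ) :
    Jbig A B C Γ u y P₀ xhat₀ xh F (k + 1) x
      = Jbig A B C Γ u y P₀ xhat₀ xh F k ((A k)⁻¹ *ᵥ (x - B k *ᵥ u k))
        + qnorm (Γ k)⁻¹ (y k - C k *ᵥ x)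
        - qnorm (F k) ((A k)⁻¹ *ᵥ (x - B k *ᵥ u k) - xh k) := by
  cases k with
  | zero =>
      simp only [Jbig]
      rw [Finset.sum_range_one, Finset.sum_range_one, Tfun_self A B u (0 + 1) x,
        Tfun_shift A B u hAk le_rfl x, Tfun_self]
      ring
  | succ k =>
      have h1 : ∑ i ∈ Finset.range (k + 1),
          qnorm (Γ i)⁻¹ (y i - C i *ᵥ Tfun A B u (i + 1) (k + 1 + 1) x)
          = ∑ i ∈ Finset.range (k + 1), qnorm (Γ i)⁻¹
              (y i - C i *ᵥ Tfun A B u (i + 1) (k + 1)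
                ((A (k + 1))⁻¹ *ᵥ (x - B (k + 1) *ᵥ u (k + 1)))) := by
        refine Finset.sum_congr rfl fun i hi => ?_
        have := Finset.mem_range.mp hi
        rw [Tfun_shift A B u hAk (by omega)]
      have h2 : ∑ i ∈ Finset.range (k + 1),
          qnorm (F i) (Tfun A B u i (k + 1 + 1) x - xh i)
          = ∑ i ∈ Finset.range (k + 1), qnorm (F i)
              (Tfun A B u i (k + 1) ((A (k + 1))⁻¹ *ᵥ (x - B (k + 1) *ᵥ u (k + 1))) - xh i) := by
        refine Finset.sum_congr rfl fun i hi => ?_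
        have := Finset.mem_range.mp hi
        rw [Tfun_shift A B u hAk (by omega)]
      have H1 : ∑ i ∈ Finset.range (k + 1 + 1),
          qnorm (Γ i)⁻¹ (y i - C i *ᵥ Tfun A B u (i + 1) (k + 1 + 1) x)
          = (∑ i ∈ Finset.range (k + 1), qnorm (Γ i)⁻¹
              (y i - C i *ᵥ Tfun A B u (i + 1) (k + 1)
                ((A (k + 1))⁻¹ *ᵥ (x - B (k + 1) *ᵥ u (k + 1)))))
            + qnorm (Γ (k + 1))⁻¹ (y (k + 1) - C (k + 1) *ᵥ x) := by
        rw [Finset.sum_range_succ, h1, Tfun_self A B u (k + 1 + 1) x]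
      have H2 : ∑ i ∈ Finset.range (k + 1 + 1),
          qnorm (F i) (Tfun A B u i (k + 1 + 1) x - xh i)
          = (∑ i ∈ Finset.range (k + 1), qnorm (F i)
              (Tfun A B u i (k + 1) ((A (k + 1))⁻¹ *ᵥ (x - B (k + 1) *ᵥ u (k + 1))) - xh i))
            + qnorm (F (k + 1))
                ((A (k + 1))⁻¹ *ᵥ (x - B (k + 1) *ᵥ u (k + 1)) - xh (k + 1)) := by
        rw [Finset.sum_range_succ, h2, Tfun_shift A B u hAk le_rfl x, Tfun_self]
      have H3 : Tfun A B u 0 (k + 1 + 1) x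
          = Tfun A B u 0 (k + 1) ((A (k + 1))⁻¹ *ᵥ (x - B (k + 1) *ᵥ u (k + 1))) :=
        Tfun_shift A B u hAk (Nat.zero_le (k + 1)) x
      simp only [Jbig]
      rw [H1, H2, H3]
      ring

lemma Pinv_closed (A : ℕ → Matrix (Fin n) (Fin n) ℝ) (C : ℕ → Matrix (Fin p) (Fin n) ℝ)
    (Γ : ℕ → Matrix (Fin p) (Fin p) ℝ) (F : ℕ → Matrix (Fin n) (Fin n) ℝ)
    (P₀ : Matrix (Fin n) (Fin n) ℝ) (k : ℕ) :
    PinvSeq A C Γ F P₀ k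
      = (Phi A 0 k)ᵀ * P₀⁻¹ * Phi A 0 k
        + ∑ i ∈ Finset.range k,
            ((Phi A (i + 1) k)ᵀ * (C i)ᵀ * (Γ i)⁻¹ * C i * Phi A (i + 1) k
              - (Phi A i k)ᵀ * F i * Phi A i k) := by
  induction k with
  | zero => simp [PinvSeq, Phi_self]
  | succ k ih =>
      have hterm : ∀ i ∈ Finset.range k,
          (Phi A (i + 1) (k + 1))ᵀ * (C i)ᵀ * (Γ i)⁻¹ * C i * Phi A (i + 1) (k + 1)
            - (Phi A i (k + 1))ᵀ * F i * Phi A i (k + 1)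
          = ((A k)⁻¹)ᵀ * ((Phi A (i + 1) k)ᵀ * (C i)ᵀ * (Γ i)⁻¹ * C i * Phi A (i + 1) k
              - (Phi A i k)ᵀ * F i * Phi A i k) * (A k)⁻¹ := by
        intro i hi
        have := Finset.mem_range.mp hi
        rw [Phi_back_succ A (by omega : i + 1 ≤ k), Phi_back_succ A (by omega : i ≤ k),
          transpose_mul, transpose_mul]
        simp only [mul_sub, sub_mul, Matrix.mul_assoc]
      have hsum : ∑ i ∈ Finset.range k,
          ((Phi A (i + 1) (k + 1))ᵀ * (C i)ᵀ * (Γ i)⁻¹ * C i * Phi A (i + 1) (k + 1)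
            - (Phi A i (k + 1))ᵀ * F i * Phi A i (k + 1))
          = ((A k)⁻¹)ᵀ * (∑ i ∈ Finset.range k,
              ((Phi A (i + 1) k)ᵀ * (C i)ᵀ * (Γ i)⁻¹ * C i * Phi A (i + 1) k
                - (Phi A i k)ᵀ * F i * Phi A i k)) * (A k)⁻¹ := by
        rw [Finset.sum_congr rfl hterm, ← Finset.sum_mul, ← Finset.mul_sum]
      have hk1 : Phi A (k + 1) (k + 1) = 1 := Phi_self A (k + 1)
      have hk2 : Phi A k (k + 1) = (A k)⁻¹ := by
        rw [Phi_back_succ A le_rfl, Phi_self, one_mul]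
      rw [Finset.sum_range_succ, hsum, hk1, hk2, Phi_back_succ A (Nat.zero_le k)]
      show ((A k)⁻¹)ᵀ * (PinvSeq A C Γ F P₀ k - F k) * (A k)⁻¹ + (C k)ᵀ * (Γ k)⁻¹ * C k = _
      rw [ih, transpose_mul]
      simp only [transpose_one, Matrix.mul_one, Matrix.one_mul, mul_sub, sub_mul, mul_add,
        add_mul, Matrix.mul_assoc]
      abel

end KFLSaux

/-- **Theorem 1 (KFLS).** Under the positive-semidefinite forgetting matrices `F k` satisfying
the strict bound (eqn: Pinv - F is pos def), there exist sequences `xh` (state estimates,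
starting at `xhat₀`) and `P` (positive-definite covariances, starting at `P₀`) satisfying the
recursions (eqn: KFRLS Pinv Update) and (eqn: KFRLS x Update), such that for every `k ≥ 0`
the estimate `xh (k+1)` is the unique global minimizer of the KFLS cost `J_k`. -/
theorem kfls_recursive_minimizer (n m p : ℕ) (hn : 0 < n) (hm : 0 < m) (hp : 0 < p)
    (A : ℕ → Matrix (Fin n) (Fin n) ℝ) (hA : ∀ k, IsUnit (A k).det)
    (B : ℕ → Matrix (Fin n) (Fin m) ℝ) (C : ℕ → Matrix (Fin p) (Fin n) ℝ)
    (Γ : ℕ → Matrix (Fin p) (Fin p) ℝ) (hΓ : ∀ k, (Γ k).PosDef)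
    (u : ℕ → Fin m → ℝ) (y : ℕ → Fin p → ℝ)
    (P₀ : Matrix (Fin n) (Fin n) ℝ) (hP₀ : P₀.PosDef) (xhat₀ : Fin n → ℝ)
    (F : ℕ → Matrix (Fin n) (Fin n) ℝ) (hFpsd : ∀ k, (F k).PosSemidef)
    (hFlt : ∀ k,
      ((Phi A 0 k)ᵀ * P₀⁻¹ * Phi A 0 k
        + ∑ i ∈ Finset.range k,
            ((Phi A (i + 1) k)ᵀ * (C i)ᵀ * (Γ i)⁻¹ * C i * Phi A (i + 1) k
              - (Phi A i k)ᵀ * F i * Phi A i k)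
        - F k).PosDef) :
    ∃ (xh : ℕ → Fin n → ℝ) (P : ℕ → Matrix (Fin n) (Fin n) ℝ),
      xh 0 = xhat₀ ∧ P 0 = P₀ ∧
      (∀ k, (P k).PosDef) ∧
      (∀ k, (P (k + 1))⁻¹
          = ((A k)⁻¹)ᵀ * ((P k)⁻¹ - F k) * (A k)⁻¹ + (C k)ᵀ * (Γ k)⁻¹ * C k) ∧
      (∀ k, xh (k + 1)
          = A k *ᵥ xh k + B k *ᵥ u k
            + P (k + 1) *ᵥ ((C k)ᵀ *ᵥ ((Γ k)⁻¹ *ᵥ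
                (y k - C k *ᵥ (A k *ᵥ xh k + B k *ᵥ u k))))) ∧
      (∀ k, ∀ x : Fin n → ℝ, x ≠ xh (k + 1) →
        ((∑ i ∈ Finset.range (k + 1),
            qnorm (Γ i)⁻¹ (y i - C i *ᵥ Tfun A B u (i + 1) (k + 1) (xh (k + 1))))
          - (∑ i ∈ Finset.range (k + 1),
              qnorm (F i) (Tfun A B u i (k + 1) (xh (k + 1)) - xh i))
          + qnorm P₀⁻¹ (Tfun A B u 0 (k + 1) (xh (k + 1)) - xhat₀))
        <
        ((∑ i ∈ Finset.range (k + 1),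
            qnorm (Γ i)⁻¹ (y i - C i *ᵥ Tfun A B u (i + 1) (k + 1) x))
          - (∑ i ∈ Finset.range (k + 1),
              qnorm (F i) (Tfun A B u i (k + 1) x - xh i))
          + qnorm P₀⁻¹ (Tfun A B u 0 (k + 1) x - xhat₀))) := by
  
  classical
  set xh : ℕ → Fin n → ℝ := KFLSaux.xhSeq A B C Γ F P₀ u y xhat₀ with hxh
  set Pinv : ℕ → Matrix (Fin n) (Fin n) ℝ := KFLSaux.PinvSeq A C Γ F P₀ with hPinvdef
  have hW : ∀ k, (Pinv k - F k).PosDef := by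
    intro k
    rw [hPinvdef, KFLSaux.Pinv_closed]
    exact hFlt k
  have hPinvPD : ∀ k, (Pinv k).PosDef := by
    intro k
    have h := (hW k).add_posSemidef (hFpsd k)
    rwa [sub_add_cancel] at h
  have hPinvDet : ∀ k, IsUnit (Pinv k).det := fun k =>
    isUnit_iff_ne_zero.mpr (hPinvPD k).det_pos.ne'
  have hP0det : IsUnit P₀.det := isUnit_iff_ne_zero.mpr hP₀.det_pos.ne'
  have hxh0 : xh 0 = xhat₀ := rfl
  have hPinv0 : Pinv 0 = P₀⁻¹ := rfl
  have hMdef : ∀ k, Pinv (k + 1)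
      = ((A k)⁻¹)ᵀ * (Pinv k - F k) * (A k)⁻¹ + (C k)ᵀ * (Γ k)⁻¹ * C k := fun k => rfl
  have hxh1 : ∀ k, xh (k + 1)
      = (A k *ᵥ xh k + B k *ᵥ u k)
        + (Pinv (k + 1))⁻¹ *ᵥ ((C k)ᵀ *ᵥ ((Γ k)⁻¹ *ᵥ
            (y k - C k *ᵥ (A k *ᵥ xh k + B k *ᵥ u k)))) := fun k => rfl
  have key : ∀ k, ∃ c : ℝ, ∀ x : Fin n → ℝ,
      KFLSaux.Jbig A B C Γ u y P₀ xhat₀ xh F k x = qnorm (Pinv k) (x - xh k) + c := by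
    intro k
    induction k with
    | zero =>
        refine ⟨0, fun x => ?_⟩
        rw [hPinv0, hxh0, add_zero]
        rfl
    | succ k ih =>
        obtain ⟨c, hc⟩ := ih
        refine ⟨(qnorm (Γ k)⁻¹ (y k - C k *ᵥ (A k *ᵥ xh k + B k *ᵥ u k))
            - qnorm (Pinv (k + 1))⁻¹ ((C k)ᵀ *ᵥ ((Γ k)⁻¹ *ᵥ
                (y k - C k *ᵥ (A k *ᵥ xh k + B k *ᵥ u k))))) + c, fun x => ?_⟩
        rw [KFLSaux.Jbig_succ A B C Γ u y P₀ xhat₀ xh F k (hA k) x, hc]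
        set z : Fin n → ℝ := (A k)⁻¹ *ᵥ (x - B k *ᵥ u k) with hzz
        set xb : Fin n → ℝ := A k *ᵥ xh k + B k *ᵥ u k with hxb
        have hz : z - xh k = (A k)⁻¹ *ᵥ (x - xb) := by
          have h1 : x - xb = (x - B k *ᵥ u k) - A k *ᵥ xh k := by rw [hxb]; abel
          rw [h1, mulVec_sub, mulVec_mulVec, Matrix.nonsing_inv_mul _ (hA k), one_mulVec, hzz]
        have hcs := KFLSaux.complete_square (Pinv k - F k) (Pinv (k + 1)) (hW k).1 ((A k)⁻¹)
            (C k) (Γ k)⁻¹ ((hΓ k).inv).1 (hMdef k) (hPinvPD (k + 1)).1 (hPinvDet (k + 1))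
            xb (y k) x
        have hsplit : qnorm (Pinv k) (z - xh k) - qnorm (F k) (z - xh k)
            = qnorm (Pinv k - F k) ((A k)⁻¹ *ᵥ (x - xb)) := by
          rw [← hz, KFLSaux.qnorm_sub_matrix]
        rw [hxh1 k]
        linarith [hcs, hsplit]
  refine ⟨xh, fun k => (Pinv k)⁻¹, hxh0, ?_, fun k => (hPinvPD k).inv, ?_, ?_, ?_⟩
  · show (Pinv 0)⁻¹ = P₀
    rw [hPinv0]
    exact Matrix.nonsing_inv_nonsing_inv P₀ hP0det
  · intro k
    show ((Pinv (k + 1))⁻¹)⁻¹ = ((A k)⁻¹)ᵀ * (((Pinv k)⁻¹)⁻¹ - F k) * (A k)⁻¹ + (C k)ᵀ * (Γ k)⁻¹ * C k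
    rw [Matrix.nonsing_inv_nonsing_inv _ (hPinvDet (k + 1)),
      Matrix.nonsing_inv_nonsing_inv _ (hPinvDet k)]
    exact hMdef k
  · intro k
    exact hxh1 k
  · intro k x hx
    obtain ⟨c, hc⟩ := key (k + 1)
    have h1 := hc x
    have h2 := hc (xh (k + 1))
    show KFLSaux.Jbig A B C Γ u y P₀ xhat₀ xh F (k + 1) (xh (k + 1))
        < KFLSaux.Jbig A B C Γ u y P₀ xhat₀ xh F (k + 1) x
    rw [h1, h2, sub_self, KFLSaux.qnorm_zero]
    have hpos := (hPinvPD (k + 1)).dotProduct_mulVec_pos (x := x - xh (k + 1)) (sub_ne_zero.mpr hx)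
    have hstar : star (x - xh (k + 1)) = x - xh (k + 1) := star_trivial _
    rw [hstar] at hpos
    have hq : qnorm (Pinv (k + 1)) (x - xh (k + 1))
        = (x - xh (k + 1)) ⬝ᵥ (Pinv (k + 1) *ᵥ (x - xh (k + 1))) := rfl
    linarith [hpos, hq.ge, hq.le]
end
end

section
/- Let A ∈ ℝ^{n×n} be nonsingular, P ∈ ℝ^{n×n} positive definite, F ∈ ℝ^{n×n} symmetric with P^{-1} − F positive definite, and define Σ = A[(P^{-1} − F)^{-1} − P]Aᵀ. Then Σ is positive definite if and only if F is positive definite. -/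
open Matrix

private lemma posDef_congr {n : ℕ} {M : Matrix (Fin n) (Fin n) ℝ}
    (hM : M.PosDef) (B : Matrix (Fin n) (Fin n) ℝ) (hB : IsUnit B.det) :
    (B * M * Bᵀ).PosDef := by
  have hBT : Bᵀ = Bᴴ := by
    ext i j; simp [conjTranspose]
  rw [hBT]
  rw [posDef_iff_dotProduct_mulVec]
  constructor
  · exact isHermitian_mul_mul_conjTranspose B hM.isHermitian
  · intro x hx
    have hBH : IsUnit (Bᴴ).det := by
      rwa [Matrix.det_conjTranspose, isUnit_star]
    have hxB : Bᴴ *ᵥ x ≠ 0 := by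
      intro h
      apply hx
      have : (Bᴴ)⁻¹ *ᵥ (Bᴴ *ᵥ x) = (Bᴴ)⁻¹ *ᵥ (0 : Fin n → ℝ) := by rw [h]
      rwa [Matrix.mulVec_mulVec, Matrix.nonsing_inv_mul _ hBH, Matrix.one_mulVec,
        Matrix.mulVec_zero] at this
    have := (posDef_iff_dotProduct_mulVec.mp hM).2 hxB
    simpa only [star_mulVec, conjTranspose_conjTranspose, Matrix.mulVec_mulVec,
      Matrix.dotProduct_mulVec, Matrix.vecMul_vecMul, Matrix.mul_assoc] using this

/-- Loewner inversion: if `X, Y` are positive definite and `X - Y` is positive definite,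
then `Y⁻¹ - X⁻¹` is positive definite. -/
private lemma inv_sub_inv_posDef {n : ℕ} {X Y : Matrix (Fin n) (Fin n) ℝ}
    (hX : X.PosDef) (hY : Y.PosDef) (h : (X - Y).PosDef) :
    (Y⁻¹ - X⁻¹).PosDef := by
  have hXu : IsUnit X.det := isUnit_iff_ne_zero.mpr hX.det_pos.ne'
  have hYu : IsUnit Y.det := isUnit_iff_ne_zero.mpr hY.det_pos.ne'
  have hXs : Xᵀ = X := hX.isHermitian.eq
  have hYs : Yᵀ = Y := hY.isHermitian.eq
  have hXis : (X⁻¹)ᵀ = X⁻¹ := by rw [Matrix.transpose_nonsing_inv, hXs]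
  have h1 : X * X⁻¹ = 1 := Matrix.mul_nonsing_inv X hXu
  have h2 : X⁻¹ * X = 1 := Matrix.nonsing_inv_mul X hXu
  have h3 : Y * Y⁻¹ = 1 := Matrix.mul_nonsing_inv Y hYu
  have h4 : Y⁻¹ * Y = 1 := Matrix.nonsing_inv_mul Y hYu
  have e1 : Y * Y⁻¹ * X = X := by rw [h3, Matrix.one_mul]
  have e2 : X * Y⁻¹ * Y = X := by rw [Matrix.mul_assoc, h4, Matrix.mul_one]
  have e3 : Y * Y⁻¹ * Y = Y := by rw [h3, Matrix.one_mul]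
  have expand : (X - Y) * Y⁻¹ * (X - Y) + (X - Y) = X * Y⁻¹ * X - X := by
    simp only [Matrix.sub_mul, Matrix.mul_sub]
    rw [e1, e2, e3]
    abel
  have e4 : X⁻¹ * (X * Y⁻¹ * X) * X⁻¹ = Y⁻¹ := by
    rw [← Matrix.mul_assoc, ← Matrix.mul_assoc, h2, Matrix.one_mul, Matrix.mul_assoc,
      h1, Matrix.mul_one]
  have e5 : X⁻¹ * X * X⁻¹ = X⁻¹ := by rw [h2, Matrix.one_mul]
  have key : Y⁻¹ - X⁻¹ = X⁻¹ * ((X - Y) * Y⁻¹ * (X - Y)ᵀ + (X - Y)) * (X⁻¹)ᵀ := by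
    rw [hXis, transpose_sub, hXs, hYs, expand, Matrix.mul_sub, Matrix.sub_mul, e4, e5]
  rw [key]
  have hsum : ((X - Y) * Y⁻¹ * (X - Y)ᵀ + (X - Y)).PosDef := by
    have hpsd : ((X - Y) * Y⁻¹ * (X - Y)ᴴ).PosSemidef :=
      (hY.inv.posSemidef).mul_mul_conjTranspose_same (X - Y)
    have hT : (X - Y)ᴴ = (X - Y)ᵀ := by ext i j; simp [conjTranspose]
    rw [← hT]
    exact h.posSemidef_add hpsd
  exact posDef_congr hsum X⁻¹ (Matrix.isUnit_nonsing_inv_det X hXu)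

/-- **(Proposition 1, definite case).** With `Σ = A[(P⁻¹ − F)⁻¹ − P]Aᵀ`, the matrix `Σ` is
positive definite if and only if `F` is positive definite. -/
theorem Sigma_pd_iff_F_pd (n : ℕ)
    (A P F : Matrix (Fin n) (Fin n) ℝ) (hA : IsUnit A.det)
    (hP : P.PosDef) (hFsymm : F.IsHermitian) (hPF : (P⁻¹ - F).PosDef)
    (S : Matrix (Fin n) (Fin n) ℝ) (hS : S = A * ((P⁻¹ - F)⁻¹ - P) * Aᵀ) :
    S.PosDef ↔ F.PosDef := by
  set Q : Matrix (Fin n) (Fin n) ℝ := P⁻¹ - F with hQ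
  have hPu : IsUnit P.det := isUnit_iff_ne_zero.mpr hP.det_pos.ne'
  have hQu : IsUnit Q.det := isUnit_iff_ne_zero.mpr hPF.det_pos.ne'
  have hPinv : (P⁻¹)⁻¹ = P := Matrix.nonsing_inv_nonsing_inv P hPu
  have hF : F = P⁻¹ - Q := (sub_sub_cancel _ _).symm
  constructor
  · intro hSpd
    have hAT : IsUnit (Aᵀ).det := by rwa [Matrix.det_transpose]
    have hM : (Q⁻¹ - P).PosDef := by
      have hEq : A⁻¹ * (A * (Q⁻¹ - P) * Aᵀ) * (A⁻¹)ᵀ = Q⁻¹ - P := by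
        rw [Matrix.transpose_nonsing_inv, Matrix.mul_assoc A (Q⁻¹ - P) Aᵀ,
          ← Matrix.mul_assoc A⁻¹ A _, Matrix.nonsing_inv_mul A hA, Matrix.one_mul,
          Matrix.mul_assoc, Matrix.mul_nonsing_inv Aᵀ hAT, Matrix.mul_one]
      have := posDef_congr (hS ▸ hSpd) A⁻¹ (Matrix.isUnit_nonsing_inv_det A hA)
      rwa [hEq] at this
    have := inv_sub_inv_posDef hPF.inv hP hM
    rwa [Matrix.nonsing_inv_nonsing_inv Q hQu, ← hF] at this
  · intro hFpd
    have hXY : (P⁻¹ - Q).PosDef := by rwa [← hF]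
    have hM := inv_sub_inv_posDef hP.inv hPF hXY
    rw [hPinv] at hM
    rw [hS]
    exact posDef_congr hM A hA
end
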